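/- Let (p, q, c) : ℝ → ℝ³ be a solution of the extended pendulum system ṗ = −sin q, q̇ = p + c, ċ = 0. Then (u, v, r) = (p, q, p² + q² + c) is a solution of the Poisson system (u̇, v̇, ṙ)ᵀ = B(u, v, r) ∇K(u, v, r), where B(u, v, r) = ((0, −1, −2v), (1, 0, 2u), (2v, −2u, 0)) and K(u, v, r) = ½u² − cos v + ur − u³ − uv², whose right-hand side equals B(u,v,r) applied to the gradient (u − 3u² − v² + r, sin v − 2uv, u)ᵀ. -/

import Mathlib

/-- Partial derivative of `F` at `y` in the `i`-th coordinate direction. -/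
noncomputable def pd {n : ℕ} (F : (Fin n → ℝ) → ℝ) (y : Fin n → ℝ) (i : Fin n) : ℝ :=
  fderiv ℝ F y (Pi.single i 1)

/-- The structure matrix of the extended pendulum system, in coordinates
`(u, v, r) = (y 0, y 1, y 2)`. -/
def Bpend : (Fin 3 → ℝ) → Matrix (Fin 3) (Fin 3) ℝ := fun y =>
  !![0, -1, -2 * y 1;
     1, 0, 2 * y 0;
     2 * y 1, -2 * y 0, 0]

/-- The Hamiltonian `K(u, v, r) = ½u² - cos v + ur - u³ - uv²` of the transformed extended
pendulum system. -/
noncomputable def Kpend : (Fin 3 → ℝ) → ℝ := fun w =>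
  (1/2) * (w 0)^2 - Real.cos (w 1) + w 0 * w 2 - (w 0)^3 - w 0 * (w 1)^2

lemma grad_K (w : Fin 3 → ℝ) : (fun i => pd Kpend w i) =
    ![w 0 - 3 * (w 0)^2 - (w 1)^2 + w 2, Real.sin (w 1) - 2 * w 0 * w 1, w 0] := by
  have h0 : HasFDerivAt (fun w : Fin 3 → ℝ => w 0)
      (ContinuousLinearMap.proj (R := ℝ) (φ := fun _ : Fin 3 => ℝ) 0) w := hasFDerivAt_apply 0 w
  have h1 : HasFDerivAt (fun w : Fin 3 → ℝ => w 1)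
      (ContinuousLinearMap.proj (R := ℝ) (φ := fun _ : Fin 3 => ℝ) 1) w := hasFDerivAt_apply 1 w
  have h2 : HasFDerivAt (fun w : Fin 3 → ℝ => w 2)
      (ContinuousLinearMap.proj (R := ℝ) (φ := fun _ : Fin 3 => ℝ) 2) w := hasFDerivAt_apply 2 w
  have hcos : HasFDerivAt (fun w : Fin 3 → ℝ => Real.cos (w 1)) _ w :=
    (Real.hasDerivAt_cos (w 1)).comp_hasFDerivAt (h₂ := Real.cos) w h1
  have hK : HasFDerivAt Kpend _ w :=
    (((((((hasDerivAt_pow 2 (w 0)).comp_hasFDerivAt w h0)).const_mul (1/2:ℝ)).sub hcos).add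
      (h0.mul h2)).sub (((hasDerivAt_pow 3 (w 0)).comp_hasFDerivAt (h₂ := fun x : ℝ => x ^ 3) w h0))).sub
      (h0.mul (((hasDerivAt_pow 2 (w 1)).comp_hasFDerivAt (h₂ := fun x : ℝ => x ^ 2) w h1)))
  funext i
  rw [pd, hK.fderiv]
  fin_cases i <;>
    simp [Pi.single_apply, Matrix.cons_val_zero, Matrix.cons_val_one] <;> ring

/-- if `(p, q, c)` solves the extended pendulum system `ṗ = -sin q`,
`q̇ = p + c`, `ċ = 0`, then `(u, v, r) = (p, q, p² + q² + c)` solves the Poisson system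
`(u̇, v̇, ṙ)ᵀ = B(u,v,r) ∇K(u,v,r)`, whose right-hand side is `B(u,v,r)` applied to the
gradient `(u - 3u² - v² + r, sin v - 2uv, u)ᵀ`. -/
theorem statement_15 (p q c : ℝ → ℝ)
    (hp : ∀ t, HasDerivAt p (-Real.sin (q t)) t)
    (hq : ∀ t, HasDerivAt q (p t + c t) t)
    (hc : ∀ t, HasDerivAt c 0 t) :
    let y : ℝ → (Fin 3 → ℝ) := fun t => ![p t, q t, (p t)^2 + (q t)^2 + c t]
    (∀ w : Fin 3 → ℝ, (fun i => pd Kpend w i) =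
      ![w 0 - 3 * (w 0)^2 - (w 1)^2 + w 2, Real.sin (w 1) - 2 * w 0 * w 1, w 0]) ∧
    (∀ t, HasDerivAt y ((Bpend (y t)).mulVec (fun i => pd Kpend (y t) i)) t) := by
  intro y
  refine ⟨grad_K, fun t => ?_⟩
  rw [grad_K]
  have hr : HasDerivAt (fun t => (p t)^2 + (q t)^2 + c t)
      (2 * p t * (-Real.sin (q t)) + 2 * q t * (p t + c t) + 0) t := by
    have := ((((hp t).pow 2).add ((hq t).pow 2)).add (hc t))
    refine this.congr_deriv ?_
    ring
  apply hasDerivAt_pi.mpr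
  intro i
  fin_cases i <;>
    simp [y, Bpend, Matrix.mulVec, dotProduct, Fin.sum_univ_three]
  · exact (hp t).congr_deriv (by ring)
  · exact (hq t).congr_deriv (by ring)
  · exact hr.congr_deriv (by ring)
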